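/- Let k, t, l be nonnegative integers with t + l = k. For the vocabulary of graphs (one binary relation ∼ and no constants), |EHR(k,t,l)| ≤ 2^{k²−k}. For the vocabulary of rooted trees (the binary parent–child relation P and one constant R): if k ≥ 5, then |EHR(k,t,l)| ≤ 2^{2^k − 2}, and if k = 4, then |EHR(4,t,l)| ≤ 3·2^{13}. -/
import Mathlib


/-- Monadic second-order formulas of graphs with `n` free vertex variables and
`m` free set variables. -/
inductive MSOForm : ℕ → ℕ → Type
  | adj {n m : ℕ} : Fin n → Fin n → MSOForm n m
  | eq  {n m : ℕ} : Fin n → Fin n → MSOForm n m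
  | mem {n m : ℕ} : Fin n → Fin m → MSOForm n m
  | not {n m : ℕ} : MSOForm n m → MSOForm n m
  | and {n m : ℕ} : MSOForm n m → MSOForm n m → MSOForm n m
  | allV {n m : ℕ} : MSOForm (n + 1) m → MSOForm n m
  | allS {n m : ℕ} : MSOForm n (m + 1) → MSOForm n m

/-- Quantifier depth (counting both kinds of quantifiers) of an MSO formula. -/
def MSOForm.depth : ∀ {n m : ℕ}, MSOForm n m → ℕ
  | _, _, .adj _ _ => 0
  | _, _, .eq _ _ => 0
  | _, _, .mem _ _ => 0
  | _, _, .not φ => φ.depth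
  | _, _, .and φ ψ => max φ.depth ψ.depth
  | _, _, .allV φ => φ.depth + 1
  | _, _, .allS φ => φ.depth + 1

/-- Satisfaction of an MSO formula on a graph under valuations of the vertex
variables and the set variables. -/
def MSOForm.Sat {V : Type} (G : SimpleGraph V) :
    ∀ {n m : ℕ}, MSOForm n m → (Fin n → V) → (Fin m → Set V) → Prop
  | _, _, .adj i j, v, _ => G.Adj (v i) (v j)
  | _, _, .eq i j, v, _ => v i = v j
  | _, _, .mem i j, v, s => v i ∈ s j
  | _, _, .not φ, v, s => ¬ MSOForm.Sat G φ v s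
  | _, _, .and φ ψ, v, s => MSOForm.Sat G φ v s ∧ MSOForm.Sat G ψ v s
  | _, _, .allV φ, v, s => ∀ x : V, MSOForm.Sat G φ (Fin.snoc v x) s
  | _, _, .allS φ, v, s => ∀ X : Set V, MSOForm.Sat G φ v (Fin.snoc s X)

/-- A finite rooted tree: a tree on `Fin n` together with a distinguished root. -/
structure FinRootedTree where
  n : ℕ
  graph : SimpleGraph (Fin n)
  isTree : graph.IsTree
  root : Fin n

/-- The parent–child relation of a rooted tree: `x` is the parent of `y`. -/
def FinRootedTree.parent (T : FinRootedTree) (x y : Fin T.n) : Prop :=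
  T.graph.Adj x y ∧ T.graph.dist T.root y = T.graph.dist T.root x + 1

/-- MSO formulas in the language of rooted trees (parent–child relation `P`,
equality, and root constant, interpreted as `none`) with `n` free vertex
variables and `m` free set variables. -/
inductive TreeForm : ℕ → ℕ → Type
  | par {n m : ℕ} : Option (Fin n) → Option (Fin n) → TreeForm n m
  | eq  {n m : ℕ} : Option (Fin n) → Option (Fin n) → TreeForm n m
  | mem {n m : ℕ} : Option (Fin n) → Fin m → TreeForm n m
  | not {n m : ℕ} : TreeForm n m → TreeForm n m
  | and {n m : ℕ} : TreeForm n m → TreeForm n m → TreeForm n m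
  | allV {n m : ℕ} : TreeForm (n + 1) m → TreeForm n m
  | allS {n m : ℕ} : TreeForm n (m + 1) → TreeForm n m

/-- Quantifier depth of an MSO rooted-tree formula. -/
def TreeForm.depth : ∀ {n m : ℕ}, TreeForm n m → ℕ
  | _, _, .par _ _ => 0
  | _, _, .eq _ _ => 0
  | _, _, .mem _ _ => 0
  | _, _, .not φ => φ.depth
  | _, _, .and φ ψ => max φ.depth ψ.depth
  | _, _, .allV φ => φ.depth + 1
  | _, _, .allS φ => φ.depth + 1

/-- Interpretation of a term (a variable or the root constant). -/
def interpTerm {V : Type} (r : V) {n : ℕ} (v : Fin n → V) : Option (Fin n) → V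
  | some i => v i
  | none => r

/-- Satisfaction of an MSO rooted-tree formula on a finite rooted tree. -/
def TreeForm.Sat (T : FinRootedTree) :
    ∀ {n m : ℕ}, TreeForm n m → (Fin n → Fin T.n) → (Fin m → Set (Fin T.n)) → Prop
  | _, _, .par a b, v, _ => T.parent (interpTerm T.root v a) (interpTerm T.root v b)
  | _, _, .eq a b, v, _ => interpTerm T.root v a = interpTerm T.root v b
  | _, _, .mem a j, v, s => interpTerm T.root v a ∈ s j
  | _, _, .not φ, v, s => ¬ TreeForm.Sat T φ v s
  | _, _, .and φ ψ, v, s => TreeForm.Sat T φ v s ∧ TreeForm.Sat T ψ v s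
  | _, _, .allV φ, v, s => ∀ x, TreeForm.Sat T φ (Fin.snoc v x) s
  | _, _, .allS φ, v, s => ∀ X, TreeForm.Sat T φ v (Fin.snoc s X)

/-- `T ≡ₖ^{MSO;tr} T'`: the two rooted trees satisfy the same MSO sentences of
quantifier depth at most `k`. -/
def MSOTreeEquiv (k : ℕ) (T T' : FinRootedTree) : Prop :=
  ∀ φ : TreeForm 0 0, φ.depth ≤ k →
    (TreeForm.Sat T φ (fun i => i.elim0) (fun i => i.elim0) ↔
      TreeForm.Sat T' φ (fun i => i.elim0) (fun i => i.elim0))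

/-- The type of finite graphs (up to the choice of vertex labels `Fin n`). -/
def FinGraph : Type := Σ n : ℕ, SimpleGraph (Fin n)

/-- A finite graph with `t` marked vertices and `l` marked vertex subsets. -/
def GMarked (t l : ℕ) : Type :=
  Σ G : FinGraph, (Fin t → Fin G.1) × (Fin l → Set (Fin G.1))

/-- Two marked graphs are `≡ₖ^{MSO}`-equivalent if they satisfy the same MSO
formulas with `t` free vertex variables and `l` free set variables of
quantifier depth at most `k - t - l`. -/
def GMarkedEquiv (k t l : ℕ) (x y : GMarked t l) : Prop :=
  ∀ φ : MSOForm t l, φ.depth ≤ k - t - l →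
    (MSOForm.Sat x.1.2 φ x.2.1 x.2.2 ↔ MSOForm.Sat y.1.2 φ y.2.1 y.2.2)

def gMarkedSetoid (k t l : ℕ) : Setoid (GMarked t l) where
  r := GMarkedEquiv k t l
  iseqv := ⟨fun _ _ _ => Iff.rfl, fun h φ hφ => (h φ hφ).symm,
    fun h1 h2 φ hφ => (h1 φ hφ).trans (h2 φ hφ)⟩

/-- `EHR(k,t,l)` for the vocabulary of graphs. -/
def GraphEHR (k t l : ℕ) : Type := Quotient (gMarkedSetoid k t l)

/-- A finite rooted tree with `t` marked vertices and `l` marked vertex subsets. -/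
def TMarked (t l : ℕ) : Type :=
  Σ T : FinRootedTree, (Fin t → Fin T.n) × (Fin l → Set (Fin T.n))

/-- Two marked rooted trees are `≡ₖ^{MSO}`-equivalent if they satisfy the same
MSO formulas with `t` free vertex variables and `l` free set variables of
quantifier depth at most `k - t - l`. -/
def TMarkedEquiv (k t l : ℕ) (x y : TMarked t l) : Prop :=
  ∀ φ : TreeForm t l, φ.depth ≤ k - t - l →
    (TreeForm.Sat x.1 φ x.2.1 x.2.2 ↔ TreeForm.Sat y.1 φ y.2.1 y.2.2)

def tMarkedSetoid (k t l : ℕ) : Setoid (TMarked t l) where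
  r := TMarkedEquiv k t l
  iseqv := ⟨fun _ _ _ => Iff.rfl, fun h φ hφ => (h φ hφ).symm,
    fun h1 h2 φ hφ => (h1 φ hφ).trans (h2 φ hφ)⟩

/-- `EHR(k,t,l)` for the vocabulary of rooted trees. -/
def TreeEHR (k t l : ℕ) : Type := Quotient (tMarkedSetoid k t l)

section Aux

attribute [local instance] Classical.propDecidable

open Finset

theorem parent_unique {T : FinRootedTree} {x x' y : Fin T.n}
    (h : T.parent x y) (h' : T.parent x' y) : x = x' := by
  obtain ⟨hadj, hd⟩ := h
  obtain ⟨hadj', hd'⟩ := h'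
  have hc := T.isTree.isConnected
  obtain ⟨W, hW⟩ := hc.exists_walk_length_eq_dist T.root x
  obtain ⟨W', hW'⟩ := hc.exists_walk_length_eq_dist T.root x'
  have hP : (W.concat hadj).length = T.graph.dist T.root y := by
    rw [SimpleGraph.Walk.length_concat]; omega
  have hP' : (W'.concat hadj').length = T.graph.dist T.root y := by
    rw [SimpleGraph.Walk.length_concat]; omega
  have p1 : (W.concat hadj).IsPath := SimpleGraph.Walk.isPath_of_length_eq_dist _ hP
  have p2 : (W'.concat hadj').IsPath := SimpleGraph.Walk.isPath_of_length_eq_dist _ hP'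
  have huniq := T.isTree.IsAcyclic.path_unique ⟨W.concat hadj, p1⟩ ⟨W'.concat hadj', p2⟩
  have hww : W.concat hadj = W'.concat hadj' := congrArg Subtype.val huniq
  have hlen : W.length = W'.length := by
    have := congrArg SimpleGraph.Walk.length hww
    simpa [SimpleGraph.Walk.length_concat] using this
  have hx : (W.concat hadj).getVert W.length = x := by
    rw [SimpleGraph.Walk.concat_eq_append, SimpleGraph.Walk.getVert_append]
    simp
  have hx' : (W'.concat hadj').getVert W.length = x' := by
    rw [SimpleGraph.Walk.concat_eq_append, SimpleGraph.Walk.getVert_append, hlen]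
    simp
  rw [← hx, ← hx', hww]

theorem min'_congr {α} [LinearOrder α] {s s' : Finset α} (h : s = s') (hs : s.Nonempty) :
    s.min' hs = s'.min' (h ▸ hs) := by subst h; rfl

variable {t l : ℕ}

def tmu (x : TMarked t l) (i : Fin (t + 1)) : Fin x.1.n :=
  interpTerm x.1.root x.2.1 (finSuccEquiv t i)

noncomputable def trep (x : TMarked t l) (i : Fin (t + 1)) : Fin (t + 1) :=
  ((Finset.univ : Finset (Fin (t + 1))).filter fun j => tmu x j = tmu x i).min'
    ⟨i, by simp⟩

lemma trep_le (x : TMarked t l) (i : Fin (t + 1)) : trep x i ≤ i :=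
  Finset.min'_le _ _ (by simp)

lemma tmu_trep (x : TMarked t l) (i : Fin (t + 1)) : tmu x (trep x i) = tmu x i := by
  have := Finset.min'_mem
    (((Finset.univ : Finset (Fin (t + 1))).filter fun j => tmu x j = tmu x i)) ⟨i, by simp⟩
  simpa [trep] using this

lemma trep_eq_trep {x : TMarked t l} {i j : Fin (t + 1)} (h : tmu x i = tmu x j) :
    trep x i = trep x j := by
  unfold trep
  exact min'_congr (by ext c; simp [h]) _

lemma tmu_eq_iff {x : TMarked t l} {i j : Fin (t + 1)} :
    tmu x i = tmu x j ↔ trep x i = trep x j :=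
  ⟨trep_eq_trep, fun h => by rw [← tmu_trep x i, h, tmu_trep]⟩

lemma trep_idem (x : TMarked t l) (i : Fin (t + 1)) : trep x (trep x i) = trep x i :=
  trep_eq_trep (tmu_trep x i)

noncomputable def tptr (x : TMarked t l) (i : Fin (t + 1)) : Option {j : Fin (t + 1) // j ≠ i} :=
  if h : ((Finset.univ : Finset (Fin (t + 1))).filter
      fun c => x.1.parent (tmu x c) (tmu x i)).Nonempty
  then some ⟨Finset.min' _ h, by
    have hm := Finset.min'_mem _ h
    simp only [Finset.mem_filter] at hm
    exact fun e => hm.2.1.ne (congrArg (tmu x) e)⟩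
  else none

abbrev TCodeT (t l : ℕ) : Type :=
  ∀ i : Fin (t + 1), (Fin i.val ⊕ Option {j : Fin (t + 1) // j ≠ i}) × (Fin l → Bool)

noncomputable def tcode (x : TMarked t l) : TCodeT t l := fun i =>
  ((if h : trep x i < i then .inl ⟨(trep x i).val, h⟩ else .inr (tptr x i)),
   fun j => decide (tmu x i ∈ x.2.2 j))
lemma trep_eq_of_code {x y : TMarked t l} (H : tcode x = tcode y) (i : Fin (t + 1)) :
    trep x i = trep y i := by
  have Hf := congrArg Prod.fst (congrFun H i)
  by_cases hx : trep x i < i <;> by_cases hy : trep y i < i <;>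
    simp only [tcode, dif_pos, dif_neg, hx, hy, dite_true, dite_false] at Hf
  · simp only [Sum.inl.injEq, Fin.mk.injEq] at Hf
    exact Fin.ext Hf
  · simp at Hf
  · simp at Hf
  · rw [le_antisymm (trep_le x i) (not_lt.mp hx), le_antisymm (trep_le y i) (not_lt.mp hy)]

lemma tptr_eq_of_code {x y : TMarked t l} (H : tcode x = tcode y) (i : Fin (t + 1))
    (hx : ¬ trep x i < i) (hy : ¬ trep y i < i) : tptr x i = tptr y i := by
  have Hf := congrArg Prod.fst (congrFun H i)
  simp only [tcode, dif_neg, hx, hy, dite_false, Sum.inr.injEq] at Hf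
  exact Hf

lemma tmem_iff_of_code {x y : TMarked t l} (H : tcode x = tcode y) (i : Fin (t + 1))
    (j : Fin l) : tmu x i ∈ x.2.2 j ↔ tmu y i ∈ y.2.2 j := by
  have Hs := congrFun (congrArg Prod.snd (congrFun H i)) j
  simpa only [tcode] using decide_eq_decide.mp Hs

lemma tmu_iff_of_code {x y : TMarked t l} (H : tcode x = tcode y) (i j : Fin (t + 1)) :
    tmu x i = tmu x j ↔ tmu y i = tmu y j := by
  rw [tmu_eq_iff, tmu_eq_iff, trep_eq_of_code H i, trep_eq_of_code H j]

lemma par_of_code {x y : TMarked t l} (H : tcode x = tcode y) {i j : Fin (t + 1)}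
    (hp : x.1.parent (tmu x i) (tmu x j)) : y.1.parent (tmu y i) (tmu y j) := by
  set r := trep x j with hr
  have hrY : trep y j = r := (trep_eq_of_code H j).symm
  have hrx : ¬ trep x r < r := by rw [hr, trep_idem]; exact lt_irrefl _
  have hry : ¬ trep y r < r := by
    rw [show trep y r = r from by rw [← hrY, trep_idem, hrY]]; exact lt_irrefl _
  have hptr : tptr x r = tptr y r := tptr_eq_of_code H r hrx hry
  have hmu : tmu x r = tmu x j := tmu_trep x j
  have hp' : x.1.parent (tmu x i) (tmu x r) := by rw [hmu]; exact hp
  have hne : (((Finset.univ : Finset (Fin (t + 1))).filter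
      fun c => x.1.parent (tmu x c) (tmu x r))).Nonempty := ⟨i, by simp [hp']⟩
  set c0 := Finset.min' _ hne with hc0def
  have hc0 : x.1.parent (tmu x c0) (tmu x r) := by
    have := Finset.min'_mem _ hne
    simpa using this
  have hceq : tmu x c0 = tmu x i := parent_unique hc0 hp'
  have hprop : ∀ (e : c0 = r), False := fun e => hc0.1.ne (congrArg (tmu x) e)
  rw [tptr, tptr, dif_pos hne] at hptr
  by_cases hne' : (((Finset.univ : Finset (Fin (t + 1))).filter
      fun c => y.1.parent (tmu y c) (tmu y r))).Nonempty
  · rw [dif_pos hne'] at hptr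
    have hmin : c0 = Finset.min' _ hne' := by
      simpa [Subtype.ext_iff] using hptr
    have hpy : y.1.parent (tmu y c0) (tmu y r) := by
      rw [hmin]
      have := Finset.min'_mem _ hne'
      simpa using this
    have hceqy : tmu y c0 = tmu y i := (tmu_iff_of_code H c0 i).mp hceq
    have hmuy : tmu y r = tmu y j := by rw [← hrY]; exact tmu_trep y j
    rw [← hceqy, ← hmuy]; exact hpy
  · rw [dif_neg hne'] at hptr
    simp at hptr

lemma par_iff_of_code {x y : TMarked t l} (H : tcode x = tcode y) (i j : Fin (t + 1)) :
    x.1.parent (tmu x i) (tmu x j) ↔ y.1.parent (tmu y i) (tmu y j) :=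
  ⟨par_of_code H, par_of_code H.symm⟩
lemma tcode_eq_of_atoms (x y : TMarked t l)
    (heq : ∀ i j, tmu x i = tmu x j ↔ tmu y i = tmu y j)
    (hpar : ∀ i j, x.1.parent (tmu x i) (tmu x j) ↔ y.1.parent (tmu y i) (tmu y j))
    (hmem : ∀ i j, tmu x i ∈ x.2.2 j ↔ tmu y i ∈ y.2.2 j) :
    tcode x = tcode y := by
  have hrep : ∀ i, trep x i = trep y i := by
    intro i
    unfold trep
    exact min'_congr (by ext c; simp [heq c i]) _
  have hptr : ∀ i, tptr x i = tptr y i := by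
    intro i
    have hfil : ((Finset.univ : Finset (Fin (t + 1))).filter
        fun c => x.1.parent (tmu x c) (tmu x i)) =
        ((Finset.univ : Finset (Fin (t + 1))).filter
        fun c => y.1.parent (tmu y c) (tmu y i)) := by
      ext c; simp [hpar c i]
    unfold tptr
    by_cases hne : (((Finset.univ : Finset (Fin (t + 1))).filter
        fun c => x.1.parent (tmu x c) (tmu x i))).Nonempty
    · rw [dif_pos hne, dif_pos (hfil ▸ hne)]
      simp only [Option.some.injEq, Subtype.ext_iff]
      exact min'_congr hfil hne
    · rw [dif_neg hne, dif_neg (by rw [← hfil]; exact hne)]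
  funext i
  unfold tcode
  refine Prod.ext ?_ (funext fun j => decide_eq_decide.mpr (hmem i j))
  simp only
  rw [hrep i]
  by_cases hlt : trep y i < i
  · rw [dif_pos hlt, dif_pos hlt]
  · rw [dif_neg hlt, dif_neg hlt, hptr i]

lemma tree_sat_agree : ∀ {n m : ℕ} (φ : TreeForm n m), φ.depth = 0 →
    ∀ (T T' : FinRootedTree) (v : Fin n → Fin T.n) (s : Fin m → Set (Fin T.n))
      (v' : Fin n → Fin T'.n) (s' : Fin m → Set (Fin T'.n)),
      (∀ a b : Option (Fin n),
        interpTerm T.root v a = interpTerm T.root v b ↔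
        interpTerm T'.root v' a = interpTerm T'.root v' b) →
      (∀ a b : Option (Fin n),
        T.parent (interpTerm T.root v a) (interpTerm T.root v b) ↔
        T'.parent (interpTerm T'.root v' a) (interpTerm T'.root v' b)) →
      (∀ (a : Option (Fin n)) (j : Fin m),
        interpTerm T.root v a ∈ s j ↔ interpTerm T'.root v' a ∈ s' j) →
      (TreeForm.Sat T φ v s ↔ TreeForm.Sat T' φ v' s') := by
  intro n m φ
  induction φ with
  | par a b =>
    intro _ T T' v s v' s' he hp hm
    exact hp a b
  | eq a b =>
    intro _ T T' v s v' s' he hp hm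
    exact he a b
  | mem a j =>
    intro _ T T' v s v' s' he hp hm
    exact hm a j
  | not φ ih =>
    intro hd T T' v s v' s' he hp hm
    have hd' : φ.depth = 0 := by simpa [TreeForm.depth] using hd
    have := ih hd' T T' v s v' s' he hp hm
    simp only [TreeForm.Sat, this]
  | and φ ψ ihφ ihψ =>
    intro hd T T' v s v' s' he hp hm
    simp only [TreeForm.depth, Nat.max_eq_zero_iff] at hd
    have h1 := ihφ hd.1 T T' v s v' s' he hp hm
    have h2 := ihψ hd.2 T T' v s v' s' he hp hm
    simp only [TreeForm.Sat, h1, h2]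
  | allV φ _ =>
    intro hd
    exact absurd hd (by simp [TreeForm.depth])
  | allS φ _ =>
    intro hd
    exact absurd hd (by simp [TreeForm.depth])

lemma tmarked_equiv_of_code {k t l : ℕ} (hk : t + l = k) {x y : TMarked t l}
    (H : tcode x = tcode y) : TMarkedEquiv k t l x y := by
  intro φ hφ
  have h0 : k - t - l = 0 := by omega
  rw [h0, Nat.le_zero] at hφ
  have key : ∀ (a : Option (Fin t)),
      interpTerm x.1.root x.2.1 a = tmu x ((finSuccEquiv t).symm a) := by
    intro a; simp [tmu]
  have key' : ∀ (a : Option (Fin t)),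
      interpTerm y.1.root y.2.1 a = tmu y ((finSuccEquiv t).symm a) := by
    intro a; simp [tmu]
  refine tree_sat_agree φ hφ x.1 y.1 x.2.1 x.2.2 y.2.1 y.2.2 ?_ ?_ ?_
  · intro a b; rw [key, key, key', key']; exact tmu_iff_of_code H _ _
  · intro a b; rw [key, key, key', key']; exact par_iff_of_code H _ _
  · intro a j; rw [key, key']; exact tmem_iff_of_code H _ j

lemma tcode_eq_of_equiv {k t l : ℕ} {x y : TMarked t l}
    (hxy : TMarkedEquiv k t l x y) : tcode x = tcode y := by
  refine tcode_eq_of_atoms x y ?_ ?_ ?_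
  · intro i j
    have := hxy (.eq (finSuccEquiv t i) (finSuccEquiv t j)) (by simp [TreeForm.depth])
    simpa [TreeForm.Sat, tmu] using this
  · intro i j
    have := hxy (.par (finSuccEquiv t i) (finSuccEquiv t j)) (by simp [TreeForm.depth])
    simpa [TreeForm.Sat, tmu] using this
  · intro i j
    have := hxy (.mem (finSuccEquiv t i) j) (by simp [TreeForm.depth])
    simpa [TreeForm.Sat, tmu] using this
abbrev GCodeT (t l : ℕ) : Type :=
  ∀ i : Fin t, (Fin i.val → Bool × Bool) × (Fin l → Bool)

noncomputable def gcode (x : GMarked t l) : GCodeT t l := fun i =>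
  (fun j => (decide (x.1.2.Adj (x.2.1 ⟨j.1, j.2.trans i.2⟩) (x.2.1 i)),
             decide (x.2.1 ⟨j.1, j.2.trans i.2⟩ = x.2.1 i)),
   fun j => decide (x.2.1 i ∈ x.2.2 j))

lemma gadj_iff_of_code {x y : GMarked t l} (H : gcode x = gcode y) (i j : Fin t) :
    x.1.2.Adj (x.2.1 i) (x.2.1 j) ↔ y.1.2.Adj (y.2.1 i) (y.2.1 j) := by
  rcases lt_trichotomy i j with hij | hij | hij
  · have Hf := congrFun (congrArg Prod.fst (congrFun H j)) ⟨i.1, hij⟩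
    have := congrArg Prod.fst Hf
    simpa only [gcode, Fin.eta] using decide_eq_decide.mp this
  · subst hij
    simp [SimpleGraph.irrefl]
  · have Hf := congrFun (congrArg Prod.fst (congrFun H i)) ⟨j.1, hij⟩
    have := congrArg Prod.fst Hf
    have h2 := decide_eq_decide.mp this
    simp only [gcode, Fin.eta] at h2
    rw [SimpleGraph.adj_comm, h2, SimpleGraph.adj_comm]
  
lemma geq_iff_of_code {x y : GMarked t l} (H : gcode x = gcode y) (i j : Fin t) :
    x.2.1 i = x.2.1 j ↔ y.2.1 i = y.2.1 j := by
  rcases lt_trichotomy i j with hij | hij | hij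
  · have Hf := congrFun (congrArg Prod.fst (congrFun H j)) ⟨i.1, hij⟩
    have := congrArg Prod.snd Hf
    simpa only [gcode, Fin.eta] using decide_eq_decide.mp this
  · subst hij; simp
  · have Hf := congrFun (congrArg Prod.fst (congrFun H i)) ⟨j.1, hij⟩
    have := congrArg Prod.snd Hf
    have h2 := decide_eq_decide.mp this
    simp only [gcode, Fin.eta] at h2
    rw [eq_comm, h2, eq_comm]

lemma gmem_iff_of_code {x y : GMarked t l} (H : gcode x = gcode y) (i : Fin t) (j : Fin l) :
    x.2.1 i ∈ x.2.2 j ↔ y.2.1 i ∈ y.2.2 j := by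
  have Hs := congrFun (congrArg Prod.snd (congrFun H i)) j
  simpa only [gcode] using decide_eq_decide.mp Hs

lemma graph_sat_agree : ∀ {n m : ℕ} (φ : MSOForm n m), φ.depth = 0 →
    ∀ {V V' : Type} (G : SimpleGraph V) (G' : SimpleGraph V')
      (v : Fin n → V) (s : Fin m → Set V) (v' : Fin n → V') (s' : Fin m → Set V'),
      (∀ i j : Fin n, G.Adj (v i) (v j) ↔ G'.Adj (v' i) (v' j)) →
      (∀ i j : Fin n, v i = v j ↔ v' i = v' j) →
      (∀ (i : Fin n) (j : Fin m), v i ∈ s j ↔ v' i ∈ s' j) →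
      (MSOForm.Sat G φ v s ↔ MSOForm.Sat G' φ v' s') := by
  intro n m φ
  induction φ with
  | adj i j =>
    intro _ V V' G G' v s v' s' ha he hm
    exact ha i j
  | eq i j =>
    intro _ V V' G G' v s v' s' ha he hm
    exact he i j
  | mem i j =>
    intro _ V V' G G' v s v' s' ha he hm
    exact hm i j
  | not φ ih =>
    intro hd V V' G G' v s v' s' ha he hm
    have hd' : φ.depth = 0 := by simpa [MSOForm.depth] using hd
    have := ih hd' G G' v s v' s' ha he hm
    simp only [MSOForm.Sat, this]
  | and φ ψ ihφ ihψ =>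
    intro hd V V' G G' v s v' s' ha he hm
    simp only [MSOForm.depth, Nat.max_eq_zero_iff] at hd
    have h1 := ihφ hd.1 G G' v s v' s' ha he hm
    have h2 := ihψ hd.2 G G' v s v' s' ha he hm
    simp only [MSOForm.Sat, h1, h2]
  | allV φ _ =>
    intro hd
    exact absurd hd (by simp [MSOForm.depth])
  | allS φ _ =>
    intro hd
    exact absurd hd (by simp [MSOForm.depth])

lemma gmarked_equiv_of_code {k t l : ℕ} (hk : t + l = k) {x y : GMarked t l}
    (H : gcode x = gcode y) : GMarkedEquiv k t l x y := by
  intro φ hφ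
  have h0 : k - t - l = 0 := by omega
  rw [h0, Nat.le_zero] at hφ
  exact graph_sat_agree φ hφ x.1.2 y.1.2 x.2.1 x.2.2 y.2.1 y.2.2
    (gadj_iff_of_code H) (geq_iff_of_code H) (gmem_iff_of_code H)

lemma gcode_eq_of_equiv {k t l : ℕ} {x y : GMarked t l}
    (hxy : GMarkedEquiv k t l x y) : gcode x = gcode y := by
  have ha : ∀ i j : Fin t, x.1.2.Adj (x.2.1 i) (x.2.1 j) ↔ y.1.2.Adj (y.2.1 i) (y.2.1 j) := by
    intro i j
    have := hxy (.adj i j) (by simp [MSOForm.depth])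
    simpa [MSOForm.Sat] using this
  have he : ∀ i j : Fin t, x.2.1 i = x.2.1 j ↔ y.2.1 i = y.2.1 j := by
    intro i j
    have := hxy (.eq i j) (by simp [MSOForm.depth])
    simpa [MSOForm.Sat] using this
  have hm : ∀ (i : Fin t) (j : Fin l), x.2.1 i ∈ x.2.2 j ↔ y.2.1 i ∈ y.2.2 j := by
    intro i j
    have := hxy (.mem i j) (by simp [MSOForm.depth])
    simpa [MSOForm.Sat] using this
  funext i
  unfold gcode
  refine Prod.ext ?_ (funext fun j => decide_eq_decide.mpr (hm i j))
  funext j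
  refine Prod.ext ?_ ?_
  · exact decide_eq_decide.mpr (ha _ _)
  · exact decide_eq_decide.mpr (he _ _)
end Aux

lemma card_ne_fin (i : Fin (t + 1)) : Fintype.card {j : Fin (t + 1) // j ≠ i} = t := by
  simp [Fintype.card_subtype_compl]

lemma card_TCodeT (t l : ℕ) :
    Fintype.card (TCodeT t l) = ∏ i : Fin (t + 1), ((i.1 + (t + 1)) * 2 ^ l) := by
  rw [Fintype.card_pi]
  refine Finset.prod_congr rfl fun i _ => ?_
  rw [Fintype.card_prod, Fintype.card_sum, Fintype.card_option, card_ne_fin,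
    Fintype.card_fin, Fintype.card_fun, Fintype.card_bool, Fintype.card_fin]

lemma card_GCodeT (t l : ℕ) :
    Fintype.card (GCodeT t l) = ∏ i : Fin t, 2 ^ (2 * i.1 + l) := by
  rw [Fintype.card_pi]
  refine Finset.prod_congr rfl fun i _ => ?_
  rw [Fintype.card_prod, Fintype.card_fun, Fintype.card_fun, Fintype.card_prod,
    Fintype.card_bool, Fintype.card_fin, Fintype.card_fin, pow_add, pow_mul]
  norm_num
lemma pow_big : ∀ k : ℕ, 5 ≤ k → k * k + k + 2 ≤ 2 ^ k := by
  intro k hk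
  induction k, hk using Nat.le_induction with
  | base => norm_num
  | succ n hn ih =>
    have h2 : 2 ^ (n + 1) = 2 * 2 ^ n := by ring
    nlinarith [ih]

lemma two_pow_lin : ∀ n : ℕ, 3 ≤ n → 2 * n + 1 ≤ 2 ^ n := by
  intro n hn
  induction n, hn using Nat.le_induction with
  | base => norm_num
  | succ n hn ih =>
    have h2 : 2 ^ (n + 1) = 2 * 2 ^ n := by ring
    have : (4 : ℕ) ≤ 2 ^ n := by
      calc (4 : ℕ) = 2 ^ 2 := by norm_num
      _ ≤ 2 ^ n := Nat.pow_le_pow_right (by norm_num) (by omega)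
    omega

lemma two_mul_add_one_le (n : ℕ) : 2 * n + 1 ≤ 2 ^ max n 3 := by
  rcases le_or_gt n 3 with h | h
  · rw [max_eq_right h]; interval_cases n <;> norm_num
  · rw [max_eq_left h.le]; exact two_pow_lin n h.le

lemma gcode_card_le {k t l : ℕ} (hk : t + l = k) :
    Fintype.card (GCodeT t l) ≤ 2 ^ (k ^ 2 - k) := by
  rw [card_GCodeT, Finset.prod_pow_eq_pow_sum]
  apply Nat.pow_le_pow_right (by norm_num)
  have hsum : (∑ i : Fin t, (2 * i.1 + l)) = ∑ i ∈ Finset.range t, (2 * i + l) := by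
    exact Fin.sum_univ_eq_sum_range (fun i => 2 * i + l) t
  rw [hsum]
  have h2 := Finset.sum_range_id_mul_two t
  have h1 : (∑ i ∈ Finset.range t, (2 * i + l)) = t * (t - 1) + t * l := by
    rw [Finset.sum_add_distrib, Finset.sum_const, Finset.card_range, smul_eq_mul,
      ← Finset.mul_sum]
    have : 2 * (∑ i ∈ Finset.range t, i) = t * (t - 1) := by omega
    rw [this, Nat.mul_comm t l]
  rw [h1]
  apply Nat.le_sub_of_add_le
  rw [pow_two]
  rcases Nat.eq_zero_or_pos t with ht | ht
  · subst ht
    simp only [Nat.zero_mul, Nat.zero_add] at hk ⊢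
    nlinarith
  · obtain ⟨s, rfl⟩ : ∃ s, t = s + 1 := ⟨t - 1, by omega⟩
    simp only [Nat.add_sub_cancel]
    nlinarith [hk]

lemma tcode_card_le {k t l : ℕ} (hk : t + l = k) (h5 : 5 ≤ k) :
    Fintype.card (TCodeT t l) ≤ 2 ^ (2 ^ k - 2) := by
  rw [card_TCodeT]
  calc (∏ i : Fin (t + 1), ((i.1 + (t + 1)) * 2 ^ l))
      ≤ ∏ _i : Fin (t + 1), 2 ^ (max t 3 + l) := by
        apply Finset.prod_le_prod'
        intro i _
        rw [pow_add]
        apply Nat.mul_le_mul_right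
        calc i.1 + (t + 1) ≤ 2 * t + 1 := by omega
        _ ≤ 2 ^ max t 3 := two_mul_add_one_le t
    _ = 2 ^ ((max t 3 + l) * (t + 1)) := by
        rw [Finset.prod_const, Finset.card_univ, Fintype.card_fin, ← pow_mul]
    _ ≤ 2 ^ (2 ^ k - 2) := by
        apply Nat.pow_le_pow_right (by norm_num)
        apply Nat.le_sub_of_add_le
        have hb := pow_big k h5
        rcases le_or_gt 3 t with h3 | h3
        · rw [max_eq_left h3]
          have h1 : (t + l) * (t + 1) + 2 ≤ k * (k + 1) + 2 := by
            rw [hk]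
            exact Nat.add_le_add_right (Nat.mul_le_mul_left k (by omega)) 2
          nlinarith
        · rw [max_eq_right (by omega)]
          have hl : l ≤ k := by omega
          have ht : t + 1 ≤ 3 := by omega
          have h1 : (3 + l) * (t + 1) ≤ (3 + k) * 3 :=
            Nat.mul_le_mul (by omega) ht
          nlinarith
noncomputable def graphEHRMap (k t l : ℕ) : GraphEHR k t l → GCodeT t l :=
  Quotient.lift (s := gMarkedSetoid k t l) gcode fun _ _ hab => gcode_eq_of_equiv (k := k) hab

lemma graphEHRMap_inj (k t l : ℕ) (hk : t + l = k) :
    Function.Injective (graphEHRMap k t l) := by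
  intro q1 q2
  refine Quotient.inductionOn₂ q1 q2 fun a b H => ?_
  exact Quotient.sound (gmarked_equiv_of_code hk H)

noncomputable def treeEHRMap (k t l : ℕ) : TreeEHR k t l → TCodeT t l :=
  Quotient.lift (s := tMarkedSetoid k t l) tcode fun _ _ hab => tcode_eq_of_equiv (k := k) hab

lemma treeEHRMap_inj (k t l : ℕ) (hk : t + l = k) :
    Function.Injective (treeEHRMap k t l) := by
  intro q1 q2
  refine Quotient.inductionOn₂ q1 q2 fun a b H => ?_
  exact Quotient.sound (tmarked_equiv_of_code hk H)
/-- for `t + l = k`, bounds on the number of `k`-Ehrenfeucht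
values of graphs and of rooted trees with `t` marked vertices and `l` marked
subsets. -/
theorem ehr_values_bound (k t l : ℕ) (h : t + l = k) :
    (Finite (GraphEHR k t l) ∧ Nat.card (GraphEHR k t l) ≤ 2 ^ (k ^ 2 - k)) ∧
    (5 ≤ k → Finite (TreeEHR k t l) ∧ Nat.card (TreeEHR k t l) ≤ 2 ^ (2 ^ k - 2)) ∧
    (k = 4 → Finite (TreeEHR k t l) ∧ Nat.card (TreeEHR k t l) ≤ 3 * 2 ^ 13) := by
  have ginj := graphEHRMap_inj k t l h
  have tinj := treeEHRMap_inj k t l h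
  have gcard : Nat.card (GraphEHR k t l) ≤ Fintype.card (GCodeT t l) := by
    rw [← Nat.card_eq_fintype_card]
    exact Nat.card_le_card_of_injective _ ginj
  have tcard : Nat.card (TreeEHR k t l) ≤ Fintype.card (TCodeT t l) := by
    rw [← Nat.card_eq_fintype_card]
    exact Nat.card_le_card_of_injective _ tinj
  refine ⟨⟨Finite.of_injective _ ginj, le_trans gcard (gcode_card_le h)⟩, ?_, ?_⟩
  · intro h5
    exact ⟨Finite.of_injective _ tinj, le_trans tcard (tcode_card_le h h5)⟩
  · intro h4
    subst h4
    refine ⟨Finite.of_injective _ tinj, le_trans tcard ?_⟩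
    rw [card_TCodeT]
    have ht : t ≤ 4 := by omega
    interval_cases t
    · obtain rfl : l = 4 := by omega
      decide
    · obtain rfl : l = 3 := by omega
      decide
    · obtain rfl : l = 2 := by omega
      decide
    · obtain rfl : l = 1 := by omega
      decide
    · obtain rfl : l = 0 := by omega
      decide
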